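/- arXiv:1011.6134 — 4 statements merged into one kernel-verified Lean document; each statement's English description precedes it below -/
import Mathlib

section
/- Let η : P([n]) → ℝ≥0 be a function on subsets of {1,...,n} with η([n]) ≥ α and Σ_{S⊆[n]} η(S) ≤ β, where 0 ≤ α ≤ β ≤ 1 and α > 0. Then there exist a set S ⊆ [n] and an element i ∉ S such that η(S∪{i})/η(S) ≥ (1−φ)/φ, where φ = 1 − (α/β)^{1/n}. -/
open Finset

section Aux
variable {n : ℕ}

lemma fiberT (k : ℕ) (T : Finset (Fin n)) (hT : T.card = k + 1) :
    ((Finset.univ.filter (fun p : Finset (Fin n) × Fin n => p.1.card = k ∧ p.2 ∉ p.1)).filter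
      (fun p => insert p.2 p.1 = T)).card = k + 1 := by
  have : ((Finset.univ.filter (fun p : Finset (Fin n) × Fin n => p.1.card = k ∧ p.2 ∉ p.1)).filter
      (fun p => insert p.2 p.1 = T)) = T.image (fun i => (T.erase i, i)) := by
    ext p
    simp only [mem_filter, mem_univ, true_and, mem_image]
    constructor
    · rintro ⟨⟨hc, hni⟩, heq⟩
      refine ⟨p.2, ?_, ?_⟩
      · rw [← heq]; exact mem_insert_self _ _
      · have : T.erase p.2 = p.1 := by rw [← heq, erase_insert hni]
        rw [this]
    · rintro ⟨i, hi, rfl⟩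
      refine ⟨⟨?_, notMem_erase _ _⟩, insert_erase hi⟩
      simp [card_erase_of_mem hi, hT]
  rw [this, card_image_of_injective _ (fun a b h => congrArg Prod.snd h), hT]

lemma fiberS (k : ℕ) (S : Finset (Fin n)) (hS : S.card = k) :
    ((Finset.univ.filter (fun p : Finset (Fin n) × Fin n => p.1.card = k ∧ p.2 ∉ p.1)).filter
      (fun p => p.1 = S)).card = n - k := by
  have : ((Finset.univ.filter (fun p : Finset (Fin n) × Fin n => p.1.card = k ∧ p.2 ∉ p.1)).filter
      (fun p => p.1 = S)) = Sᶜ.image (fun i => (S, i)) := by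
    ext p
    simp only [mem_filter, mem_univ, true_and, mem_image, mem_compl]
    constructor
    · rintro ⟨⟨hc, hni⟩, heq⟩
      exact ⟨p.2, heq ▸ hni, by rw [← heq]⟩
    · rintro ⟨i, hi, rfl⟩
      exact ⟨⟨hS, hi⟩, rfl⟩
  rw [this, card_image_of_injective _ (fun a b h => congrArg Prod.snd h), card_compl, hS,
    Fintype.card_fin]

end Aux

/-- Lemma D.2 (hfunc). -/
theorem stmt0 (n : ℕ) (hn : 1 ≤ n) (η : Finset (Fin n) → ℝ)
    (hpos : ∀ S : Finset (Fin n), 0 < η S)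
    (α β : ℝ) (hα : 0 < α) (hαβ : α ≤ β) (hβ : β ≤ 1)
    (hη : α ≤ η Finset.univ) (hsum : ∑ S : Finset (Fin n), η S ≤ β)
    (φ : ℝ) (hφ : φ = 1 - (α / β) ^ ((1 : ℝ) / (n : ℝ)))
    (hφ0 : 0 < φ) (hφ1 : φ < 1) :
    ∃ (S : Finset (Fin n)) (i : Fin n), i ∉ S ∧
      (1 - φ) / φ ≤ η (insert i S) / η S := by
  by_contra hcon
  push_neg at hcon
  set c : ℝ := (1 - φ) / φ with hc_def
  have hc : 0 < c := div_pos (by linarith) hφ0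
  have hkey : ∀ (S : Finset (Fin n)) (i : Fin n), i ∉ S → η (insert i S) < c * η S := by
    intro S i hi
    have h1 := hcon S i hi
    rw [div_lt_iff₀ (hpos S)] at h1
    linarith [h1]
  set a : ℕ → ℝ := fun k => ∑ S ∈ powersetCard k (univ : Finset (Fin n)), η S with ha_def
  have hcard_univ : (univ : Finset (Fin n)).card = n := by simp
  -- step inequality
  have hstep : ∀ k, k < n → ((k : ℝ) + 1) * a (k + 1) < c * ((n : ℝ) - k) * a k := by
    intro k hk
    set s : Finset (Finset (Fin n) × Fin n) :=
      Finset.univ.filter (fun p : Finset (Fin n) × Fin n => p.1.card = k ∧ p.2 ∉ p.1) with hs_def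
    have hmapsT : ∀ p ∈ s, insert p.2 p.1 ∈ powersetCard (k + 1) (univ : Finset (Fin n)) := by
      intro p hp
      rw [hs_def, mem_filter] at hp
      rw [mem_powersetCard_univ, card_insert_of_notMem hp.2.2, hp.2.1]
    have hmapsS : ∀ p ∈ s, p.1 ∈ powersetCard k (univ : Finset (Fin n)) := by
      intro p hp
      rw [hs_def, mem_filter] at hp
      rw [mem_powersetCard_univ, hp.2.1]
    have h1 : ∑ p ∈ s, η (insert p.2 p.1) = ((k : ℝ) + 1) * a (k + 1) := by
      rw [← sum_fiberwise_of_maps_to hmapsT (fun p => η (insert p.2 p.1))]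
      rw [ha_def]
      simp only [mul_sum]
      refine sum_congr rfl fun T hT => ?_
      rw [mem_powersetCard_univ] at hT
      rw [sum_congr rfl (fun p hp => by rw [(mem_filter.1 hp).2]), sum_const, fiberT k T hT,
        nsmul_eq_mul]
      push_cast
      ring
    have h2 : ∑ p ∈ s, c * η p.1 = c * ((n : ℝ) - k) * a k := by
      rw [← sum_fiberwise_of_maps_to hmapsS (fun p => c * η p.1)]
      rw [ha_def]
      simp only [mul_sum]
      refine sum_congr rfl fun S hS => ?_
      rw [mem_powersetCard_univ] at hS
      rw [sum_congr rfl (fun p hp => by rw [(mem_filter.1 hp).2]), sum_const, fiberS k S hS,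
        nsmul_eq_mul, Nat.cast_sub hk.le]
      ring
    have hne : s.Nonempty := by
      have hpn : (powersetCard k (univ : Finset (Fin n))).Nonempty :=
        powersetCard_nonempty.2 (by rw [hcard_univ]; exact hk.le)
      obtain ⟨S, hS⟩ := hpn
      rw [mem_powersetCard_univ] at hS
      have hSc : Sᶜ.Nonempty := by
        rw [← card_pos, card_compl, Fintype.card_fin, hS]
        omega
      obtain ⟨i, hi⟩ := hSc
      rw [mem_compl] at hi
      exact ⟨(S, i), by rw [hs_def, mem_filter]; exact ⟨mem_univ _, hS, hi⟩⟩
    rw [← h1, ← h2]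
    exact sum_lt_sum_of_nonempty hne fun p hp => by
      rw [hs_def, mem_filter] at hp
      exact hkey p.1 p.2 hp.2.2
  -- a n = η univ
  have han : a n = η univ := by
    have h := powersetCard_self (univ : Finset (Fin n))
    rw [hcard_univ] at h
    rw [ha_def]
    simp only [h, sum_singleton]
  -- main claim: downward induction
  have hclaim : ∀ m k, k < n → n = k + 1 + m →
      α * (n.choose k) * c ^ k < a k * c ^ n := by
    intro m
    induction m with
    | zero =>
      intro k hk hkn
      have hk1 : k + 1 = n := by omega
      have hch : n.choose k = k + 1 := by
        rw [← hk1]; exact Nat.choose_succ_self_right k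
      have hstepk := hstep k hk
      have hnk : (n : ℝ) - k = 1 := by
        rw [← hk1]; push_cast; ring
      rw [hnk, mul_one] at hstepk
      have han' : α ≤ a (k + 1) := by rw [hk1, han]; exact hη
      have hk0 : (0 : ℝ) ≤ (k : ℝ) := Nat.cast_nonneg k
      have h1 : ((k : ℝ) + 1) * α < c * a k := lt_of_le_of_lt (by nlinarith) hstepk
      have hcpow : (0 : ℝ) < c ^ k := pow_pos hc k
      calc α * (n.choose k) * c ^ k = (((k : ℝ) + 1) * α) * c ^ k := by
            rw [hch]; push_cast; ring
      _ < (c * a k) * c ^ k := by nlinarith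
      _ = a k * c ^ n := by rw [← hk1]; ring
    | succ m ih =>
      intro k hk hkn
      have hk1 : k + 1 < n := by omega
      have ihk := ih (k + 1) hk1 (by omega)
      have hstepk := hstep k hk
      have hid : (n.choose (k + 1) : ℝ) * ((k : ℝ) + 1) = (n.choose k : ℝ) * ((n : ℝ) - k) := by
        have h := Nat.choose_succ_right_eq n k
        have hcast : ((n.choose (k + 1) : ℕ) : ℝ) * (((k : ℕ) + 1 : ℕ) : ℝ)
            = ((n.choose k : ℕ) : ℝ) * ((n - k : ℕ) : ℝ) := by
          rw [← Nat.cast_mul, ← Nat.cast_mul, h]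
        rw [Nat.cast_sub hk.le] at hcast
        push_cast at hcast
        linarith [hcast]
      have hnk : (0 : ℝ) < (n : ℝ) - k := by
        have : (k : ℝ) < n := by exact_mod_cast hk
        linarith
      have hcpow : (0 : ℝ) < c ^ n := pow_pos hc n
      have hk0 : (0 : ℝ) ≤ (k : ℝ) := Nat.cast_nonneg k
      have h1 : α * (n.choose (k + 1) : ℝ) * c ^ (k + 1) * ((k : ℝ) + 1) <
          (c * ((n : ℝ) - k) * a k) * c ^ n := by
        calc α * (n.choose (k + 1) : ℝ) * c ^ (k + 1) * ((k : ℝ) + 1)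
            < a (k + 1) * c ^ n * ((k : ℝ) + 1) := by nlinarith
        _ = (((k : ℝ) + 1) * a (k + 1)) * c ^ n := by ring
        _ < (c * ((n : ℝ) - k) * a k) * c ^ n := by nlinarith
      have h2 : α * (n.choose (k + 1) : ℝ) * c ^ (k + 1) * ((k : ℝ) + 1)
          = (α * (n.choose k : ℝ) * c ^ k) * (((n : ℝ) - k) * c) := by
        rw [pow_succ]
        linear_combination α * c ^ k * c * hid
      rw [h2] at h1
      have h3 : (c * ((n : ℝ) - k) * a k) * c ^ n = (a k * c ^ n) * (((n : ℝ) - k) * c) := by ring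
      rw [h3] at h1
      exact lt_of_mul_lt_mul_right h1 (mul_pos hnk hc).le
  -- sum over all subsets splits into layers
  have hsplit : ∑ S : Finset (Fin n), η S = ∑ k ∈ range (n + 1), a k := by
    have h1 : ∑ S : Finset (Fin n), η S = ∑ S ∈ (univ : Finset (Fin n)).powerset, η S := by
      rw [powerset_univ]
    rw [h1, sum_powerset, hcard_univ]
  have hfin : ∑ k ∈ range (n + 1), α * (n.choose k : ℝ) * c ^ k <
      (∑ k ∈ range (n + 1), a k) * c ^ n := by
    rw [sum_mul]
    apply sum_lt_sum
    · intro k hk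
      rw [mem_range] at hk
      rcases lt_or_eq_of_le (Nat.lt_succ_iff.1 hk) with h | h
      · exact (hclaim (n - (k + 1)) k h (by omega)).le
      · subst h
        rw [Nat.choose_self]
        have h4 : α ≤ a k := by rw [han]; exact hη
        have : (0 : ℝ) < c ^ k := pow_pos hc k
        push_cast
        nlinarith
    · exact ⟨0, mem_range.2 (by omega), hclaim (n - 1) 0 (by omega) (by omega)⟩
  have hlhs : ∑ k ∈ range (n + 1), α * (n.choose k : ℝ) * c ^ k = α * (c + 1) ^ n := by
    rw [add_pow, mul_sum]
    exact sum_congr rfl fun k hk => by ring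
  have hrhs : (∑ k ∈ range (n + 1), a k) * c ^ n ≤ β * c ^ n := by
    apply mul_le_mul_of_nonneg_right _ (pow_pos hc n).le
    rw [← hsplit]; exact hsum
  have hmain : α * (c + 1) ^ n < β * c ^ n := by
    rw [← hlhs]; exact lt_of_lt_of_le hfin hrhs
  -- final computation
  have hβ0 : (0 : ℝ) < β := lt_of_lt_of_le hα hαβ
  have h1φ : (1 : ℝ) - φ = (α / β) ^ ((1 : ℝ) / (n : ℝ)) := by rw [hφ]; ring
  have hn0 : (n : ℝ) ≠ 0 := by positivity
  have hφn : (1 - φ) ^ n = α / β := by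
    rw [h1φ, ← Real.rpow_natCast ((α / β) ^ ((1 : ℝ) / (n : ℝ))) n,
      ← Real.rpow_mul (by positivity), one_div, inv_mul_cancel₀ hn0, Real.rpow_one]
  have hc1 : c + 1 = 1 / φ := by rw [hc_def]; field_simp; ring
  have hcn : c ^ n = (α / β) / φ ^ n := by rw [hc_def, div_pow, hφn]
  rw [hc1, hcn] at hmain
  have heq : β * (α / β / φ ^ n) = α * (1 / φ) ^ n := by
    rw [one_div, inv_pow]
    field_simp
  rw [heq] at hmain
  exact lt_irrefl _ hmain
end

section
/- Suppose π is a probability distribution over subsets M ⊆ [n] such that π(M) > 0 for all M, π([n]) ≥ (1−γ)^n, and max over pairs (i, M with i∉M) of π(M∪{i})/π(M) is at most (1−γ)/γ, where γ ∈ (0,1). Then π(M) = γ^{n−|M|}(1−γ)^{|M|} for all M ⊆ [n]. In other words, the distribution π̄(M) = γ^{n−|M|}(1−γ)^{|M|} is the unique distribution with precision at least (1−γ)^n minimizing the worst-case coefficient max_{i∉M} π(M∪{i})/π(M). -/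
open Finset

/-- uniqueness of the optimal MIDR resampling distribution. -/
theorem stmt3 (n : ℕ) (hn : 1 ≤ n) (γ : ℝ) (h0 : 0 < γ) (h1 : γ < 1)
    (π : Finset (Fin n) → ℝ) (hpos : ∀ M : Finset (Fin n), 0 < π M)
    (hsum : ∑ M : Finset (Fin n), π M = 1)
    (hprec : (1 - γ) ^ n ≤ π Finset.univ)
    (hmax : ∀ (M : Finset (Fin n)) (i : Fin n), i ∉ M →
      π (insert i M) / π M ≤ (1 - γ) / γ) :
    ∀ M : Finset (Fin n), π M = γ ^ (n - M.card) * (1 - γ) ^ M.card := by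
  have hγ1 : (0:ℝ) < 1 - γ := by linarith
  set r := (1 - γ) / γ with hr
  have hrpos : 0 < r := div_pos hγ1 h0
  -- chain inequality
  have key : ∀ k (M : Finset (Fin n)), n - M.card = k → π univ ≤ r ^ k * π M := by
    intro k
    induction k with
    | zero =>
      intro M hM
      have hle : M.card ≤ n := by
        have := Finset.card_le_univ M
        simpa using this
      have hcard : M.card = n := by omega
      have : M = univ := Finset.eq_univ_of_card M (by simpa using hcard)
      rw [this]
      simp
    | succ k ih =>
      intro M hM
      have hle : M.card ≤ n := by
        have := Finset.card_le_univ M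
        simpa using this
      have hcard : M.card < n := by omega
      have hne : M ≠ univ := by
        intro h
        rw [h, Finset.card_univ, Fintype.card_fin] at hcard
        omega
      obtain ⟨i, hi⟩ : ∃ i, i ∉ M := by
        by_contra h
        push_neg at h
        exact hne (Finset.eq_univ_iff_forall.mpr h)
      have hins : (insert i M).card = M.card + 1 := Finset.card_insert_of_notMem hi
      have h1 : π univ ≤ r ^ k * π (insert i M) := ih (insert i M) (by omega)
      have h2 : π (insert i M) ≤ r * π M := by
        have := (div_le_iff₀ (hpos M)).mp (hmax M i hi)
        calc π (insert i M) ≤ (1 - γ) / γ * π M := this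
          _ = r * π M := by rw [hr]
      calc π univ ≤ r ^ k * π (insert i M) := h1
        _ ≤ r ^ k * (r * π M) :=
            mul_le_mul_of_nonneg_left h2 (le_of_lt (pow_pos hrpos k))
        _ = r ^ (k + 1) * π M := by ring
  -- pointwise lower bound
  have hlow : ∀ M : Finset (Fin n),
      γ ^ (n - M.card) * (1 - γ) ^ M.card ≤ π M := by
    intro M
    set k := n - M.card with hk
    have hle : M.card ≤ n := by
      have := Finset.card_le_univ M
      simpa using this
    have h1 : (1 - γ) ^ n ≤ r ^ k * π M := le_trans hprec (key k M rfl)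
    have hn' : k + M.card = n := by omega
    have hsplit : (1 - γ) ^ n = (1 - γ) ^ k * (1 - γ) ^ M.card := by
      rw [← pow_add, hn']
    rw [hsplit, hr, div_pow, div_mul_eq_mul_div, le_div_iff₀ (pow_pos h0 k)] at h1
    have hck : (0:ℝ) < (1 - γ) ^ k := pow_pos hγ1 k
    nlinarith [h1, hck, pow_pos h0 k, pow_pos hγ1 M.card, hpos M]
  -- sum of lower bounds is 1
  have hbin : ∑ M : Finset (Fin n), γ ^ (n - M.card) * (1 - γ) ^ M.card = 1 := by
    have := Finset.prod_add (fun _ : Fin n => 1 - γ) (fun _ : Fin n => γ) univ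
    simp only [Finset.prod_const, Finset.card_univ, Fintype.card_fin,
      Finset.card_sdiff_of_subset (Finset.subset_univ _)] at this
    calc ∑ M : Finset (Fin n), γ ^ (n - M.card) * (1 - γ) ^ M.card
        = ∑ t ∈ univ.powerset, (1 - γ) ^ t.card * γ ^ (n - t.card) := by
          rw [Finset.powerset_univ]
          exact Finset.sum_congr rfl (fun t _ => mul_comm _ _)
      _ = (1 - γ + γ) ^ n := this.symm
      _ = 1 := by norm_num
  intro M
  have := (Finset.sum_eq_sum_iff_of_le
    (fun M _ => hlow M)).mp (by rw [hbin, hsum]) M (Finset.mem_univ M)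
  linarith [this]
end

section
/- Let π be a probability distribution on subsets of [n]. Suppose values w : P([n]) × [n] → ℝ≥0 satisfy the monotonicity property that Σ_{j∈M} w(M,j) ≥ Σ_{j∈M} w([n],j) for all M ⊆ [n]. Then Σ_{M⊆[n]} π(M) Σ_{j∈[n]} w(M,j) ≥ (min_{j∈[n]} Pr_{M∼π}(j ∈ M)) · Σ_{j∈[n]} w([n],j). (Welfare approximation lower bound for MIDR single-call reductions.) -/
open Finset

/-- welfare approximation lower bound for MIDR single-call reductions. -/
theorem stmt7 (n : ℕ) [NeZero n] (π : Finset (Fin n) → ℝ)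
    (hπ : ∀ M : Finset (Fin n), 0 ≤ π M)
    (hsum : ∑ M : Finset (Fin n), π M = 1)
    (w : Finset (Fin n) → Fin n → ℝ) (hw : ∀ M j, 0 ≤ w M j)
    (hmono : ∀ M : Finset (Fin n), ∑ j ∈ M, w Finset.univ j ≤ ∑ j ∈ M, w M j) :
    (Finset.univ.inf' Finset.univ_nonempty
        (fun j : Fin n => ∑ M ∈ Finset.univ.filter (fun M : Finset (Fin n) => j ∈ M), π M)) *
      (∑ j : Fin n, w Finset.univ j) ≤
    ∑ M : Finset (Fin n), π M * ∑ j : Fin n, w M j := by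
  set c := (Finset.univ.inf' Finset.univ_nonempty
      (fun j : Fin n => ∑ M ∈ Finset.univ.filter (fun M : Finset (Fin n) => j ∈ M), π M))
  calc c * (∑ j : Fin n, w Finset.univ j)
      = ∑ j : Fin n, c * w Finset.univ j := by rw [Finset.mul_sum]
    _ ≤ ∑ j : Fin n, (∑ M ∈ Finset.univ.filter (fun M : Finset (Fin n) => j ∈ M), π M)
          * w Finset.univ j := by
        refine Finset.sum_le_sum fun j _ => ?_
        exact mul_le_mul_of_nonneg_right (Finset.inf'_le _ (Finset.mem_univ j)) (hw _ j)
    _ = ∑ j : Fin n, ∑ M ∈ Finset.univ.filter (fun M : Finset (Fin n) => j ∈ M),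
          π M * w Finset.univ j := by
        simp [Finset.sum_mul]
    _ = ∑ M : Finset (Fin n), ∑ j ∈ M, π M * w Finset.univ j := by
        simp only [Finset.sum_filter]
        rw [Finset.sum_comm]
        congr 1
        funext M
        rw [← Finset.sum_filter]
        congr 1
        simp
    _ = ∑ M : Finset (Fin n), π M * ∑ j ∈ M, w Finset.univ j := by
        simp [Finset.mul_sum]
    _ ≤ ∑ M : Finset (Fin n), π M * ∑ j ∈ M, w M j := by
        refine Finset.sum_le_sum fun M _ => mul_le_mul_of_nonneg_left (hmono M) (hπ M)
    _ ≤ ∑ M : Finset (Fin n), π M * ∑ j : Fin n, w M j := by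
        refine Finset.sum_le_sum fun M _ => mul_le_mul_of_nonneg_left ?_ (hπ M)
        exact Finset.sum_le_sum_of_subset_of_nonneg (Finset.subset_univ M)
          (fun j _ _ => hw M j)
end

section
/- Let π and π̄ be probability distributions over subsets of [n] with all values positive, where π̄(M) = γ^{n−|M|}(1−γ)^{|M|}. If max_{i, M: i∉M} π(M∪{i})/π(M) < (1−γ)/γ, then max_i Pr_{π}(i ∉ M) > max_i Pr_{π̄}(i ∉ M) = γ. -/
open Finset

lemma binom_aux (n : ℕ) (γ : ℝ) (s : Finset (Fin n)) :
    ∑ t ∈ s.powerset, (1 - γ) ^ t.card * γ ^ (s.card - t.card) = 1 := by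
  have h := Finset.prod_add (fun _ : Fin n => (1 - γ)) (fun _ => γ) s
  simp only [prod_const] at h
  have : ∀ t ∈ s.powerset, (1 - γ) ^ t.card * γ ^ (s.card - t.card)
      = (1 - γ) ^ t.card * γ ^ (s \ t).card := by
    intro t ht
    rw [card_sdiff_of_subset (mem_powerset.mp ht)]
  rw [Finset.sum_congr rfl this, ← h]
  norm_num

/-- smaller worst-case coefficient forces larger resampling probability. -/
theorem stmt9 (n : ℕ) (hn : 1 ≤ n) (γ : ℝ) (h0 : 0 < γ) (h1 : γ < 1)
    (π : Finset (Fin n) → ℝ) (hpos : ∀ M : Finset (Fin n), 0 < π M)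
    (hsum : ∑ M : Finset (Fin n), π M = 1)
    (hmax : ∀ (M : Finset (Fin n)) (i : Fin n), i ∉ M →
      π (insert i M) / π M < (1 - γ) / γ) :
    (∀ i : Fin n,
      ∑ M ∈ Finset.univ.filter (fun M : Finset (Fin n) => i ∉ M),
        γ ^ (n - M.card) * (1 - γ) ^ M.card = γ) ∧
    ∃ i : Fin n,
      γ < ∑ M ∈ Finset.univ.filter (fun M : Finset (Fin n) => i ∉ M), π M := by
  constructor
  · intro i
    have hset : Finset.univ.filter (fun M : Finset (Fin n) => i ∉ M)
        = (Finset.univ.erase i).powerset := by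
      ext M
      simp [Finset.subset_erase]
    have hcard : (Finset.univ.erase i).card = n - 1 := by
      rw [Finset.card_erase_of_mem (mem_univ i)]
      simp
    have key : ∀ M ∈ (Finset.univ.erase i).powerset,
        γ ^ (n - M.card) * (1 - γ) ^ M.card
          = γ * ((1 - γ) ^ M.card * γ ^ ((Finset.univ.erase i).card - M.card)) := by
      intro M hM
      have hMc : M.card ≤ n - 1 := by
        rw [← hcard]; exact Finset.card_le_card (mem_powerset.mp hM)
      have : n - M.card = (n - 1 - M.card) + 1 := by omega
      rw [hcard, this, pow_succ]
      ring
    rw [hset, Finset.sum_congr rfl key, ← Finset.mul_sum, binom_aux, mul_one]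
  · refine ⟨⟨0, hn⟩, ?_⟩
    set i : Fin n := ⟨0, hn⟩
    by_contra hle
    push_neg at hle
    set P := ∑ M ∈ Finset.univ.filter (fun M : Finset (Fin n) => i ∉ M), π M with hP
    set Q := ∑ M ∈ Finset.univ.filter (fun M : Finset (Fin n) => i ∉ M), π (insert i M) with hQ
    -- Q equals the sum over sets containing i
    have hQ' : Q = ∑ M ∈ Finset.univ.filter (fun M : Finset (Fin n) => i ∈ M), π M := by
      rw [hQ]
      apply Finset.sum_nbij' (fun M => insert i M) (fun M => M.erase i)
      · intro M hM; simp
      · intro M hM; simp at hM ⊢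
      · intro M hM; simp at hM; exact Finset.erase_insert hM
      · intro M hM; simp at hM; exact Finset.insert_erase hM
      · intro M hM; rfl
    have hPQ : P + Q = 1 := by
      rw [hP, hQ', ← hsum]
      rw [← Finset.sum_filter_add_sum_filter_not Finset.univ (fun M : Finset (Fin n) => i ∉ M)]
      simp
    -- pointwise strict inequality summed
    have hne : (Finset.univ.filter (fun M : Finset (Fin n) => i ∉ M)).Nonempty :=
      ⟨∅, by simp⟩
    have hstrict : γ * Q < (1 - γ) * P := by
      rw [hQ, hP, Finset.mul_sum, Finset.mul_sum]
      apply Finset.sum_lt_sum_of_nonempty hne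
      intro M hM
      simp only [Finset.mem_filter] at hM
      have h := hmax M i hM.2
      have hπ := hpos M
      rw [div_lt_div_iff₀ hπ h0] at h
      nlinarith
    have hQge : 1 - γ ≤ Q := by nlinarith
    nlinarith
end
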